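/- Let E' ⊆ E be fields of characteristic 0. Let V be a finite-dimensional E'-vector space, W a finite increasing filtration by E'-subspaces, and N : V → V an E'-linear nilpotent map respecting W. Then a finite increasing filtration W' on V by E'-subspaces is the relative monodromy filtration of N with respect to W if and only if E ⊗_{E'} W' is the relative monodromy filtration of 1 ⊗ N with respect to E ⊗_{E'} W on E ⊗_{E'} V. -/

import Mathlib

open Submodule

/-- `W` is a finite increasing filtration on `V`. -/
def IsFinIncrFiltration {E V : Type*} [Field E] [AddCommGroup V] [Module E V]
    (W : ℤ → Submodule E V) : Prop :=
  Monotone W ∧ (∃ a : ℤ, ∀ w ≤ a, W w = ⊥) ∧ (∃ b : ℤ, ∀ w : ℤ, b ≤ w → W w = ⊤)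

/-- `W'` is the relative monodromy filtration of `N` with respect to `W`:
`W'` is a finite increasing filtration, `N (W'_w) ⊆ W'_{w-2}`, and for all `w` and `m ≥ 0`
the map induced by `N^m` from `gr^{W'}_{w+m} gr^W_w` to `gr^{W'}_{w-m} gr^W_w` is an
isomorphism (expressed at the level of subspaces of `V`: the `k`-th piece of the filtration
induced by `W'` on `gr^W_w` is the image of `(W' k ⊓ W w) ⊔ W (w-1)`). -/
def IsRelMonodromy {E V : Type*} [Field E] [AddCommGroup V] [Module E V]
    (N : V →ₗ[E] V) (W W' : ℤ → Submodule E V) : Prop :=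
  IsFinIncrFiltration W' ∧
  (∀ w : ℤ, (W' w).map N ≤ W' (w - 2)) ∧
  (∀ (w : ℤ) (m : ℕ),
    -- injectivity of the induced map `N^m : gr^{W'}_{w+m} gr^W_w → gr^{W'}_{w-m} gr^W_w`
    (∀ x ∈ W' (w + (m : ℤ)) ⊓ W w,
        (N ^ m) x ∈ (W' (w - (m : ℤ) - 1) ⊓ W w) ⊔ W (w - 1) →
        x ∈ (W' (w + (m : ℤ) - 1) ⊓ W w) ⊔ W (w - 1)) ∧
    -- surjectivity of the induced map
    (∀ y ∈ W' (w - (m : ℤ)) ⊓ W w, ∃ x ∈ W' (w + (m : ℤ)) ⊓ W w,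
        y - (N ^ m) x ∈ (W' (w - (m : ℤ) - 1) ⊓ W w) ⊔ W (w - 1)))

open Submodule TensorProduct
open scoped Classical

section BC
variable {E' E V : Type*} [Field E'] [Field E] [Algebra E' E]
  [AddCommGroup V] [Module E' V]

noncomputable def bcEquiv : E ⊗[E'] V ≃ₗ[E'] (Module.Basis.ofVectorSpaceIndex E' E →₀ V) :=
  (TensorProduct.congr (Module.Basis.ofVectorSpace E' E).repr (LinearEquiv.refl E' V)).trans
    (TensorProduct.finsuppScalarLeft E' V _)

lemma bcEquiv_tmul (a : E) (v : V) (i) :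
    (bcEquiv (a ⊗ₜ[E'] v) : _ →₀ V) i = (Module.Basis.ofVectorSpace E' E).repr a i • v := by
  simp [bcEquiv]

lemma bcEquiv_symm_single (i) (v : V) :
    (bcEquiv (E := E)).symm (Finsupp.single i v) = (Module.Basis.ofVectorSpace E' E) i ⊗ₜ[E'] v := by
  simp [bcEquiv, LinearEquiv.symm_trans_apply, TensorProduct.congr_symm_tmul]

lemma bc_reconstruct (x : E ⊗[E'] V) :
    x = (bcEquiv x).sum fun i v => (Module.Basis.ofVectorSpace E' E) i ⊗ₜ[E'] v := by
  conv_lhs => rw [← (bcEquiv (E := E) (V := V)).symm_apply_apply x, ← Finsupp.sum_single (bcEquiv x)]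
  rw [map_finsuppSum]
  exact Finsupp.sum_congr fun i _ => bcEquiv_symm_single i _

end BC

section BC2
variable {E' E V : Type*} [Field E'] [Field E] [Algebra E' E]
  [AddCommGroup V] [Module E' V] {p q : Submodule E' V}

lemma mem_bc_iff {x : E ⊗[E'] V} :
    x ∈ p.baseChange E ↔ ∀ i, (bcEquiv x : _ →₀ V) i ∈ p := by
  constructor
  · intro hx
    rw [Submodule.baseChange_eq_span] at hx
    induction hx using Submodule.span_induction with
    | mem x h =>
      obtain ⟨m, hm, rfl⟩ := h
      intro i
      simpa [TensorProduct.mk, bcEquiv_tmul] using p.smul_mem _ hm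
    | zero => simp
    | add x y hx hy ihx ihy => intro i; simpa [map_add] using add_mem (ihx i) (ihy i)
    | smul e x hx ih =>
      intro i
      have hx' : e • x = (bcEquiv x).sum
          fun j v => (e * Module.Basis.ofVectorSpace E' E j) ⊗ₜ[E'] v := by
        conv_lhs => rw [bc_reconstruct x]
        rw [Finsupp.smul_sum]
        exact Finsupp.sum_congr fun j _ => by rw [smul_tmul']; rfl
      rw [hx', map_finsuppSum, Finsupp.sum_apply, Finsupp.sum]
      exact Submodule.sum_mem _ fun j hj => by rw [bcEquiv_tmul]; exact p.smul_mem _ (ih j)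
  · intro h
    rw [bc_reconstruct x, Finsupp.sum]
    exact Submodule.sum_mem _ fun j hj => Submodule.tmul_mem_baseChange_of_mem _ (h j)

lemma one_tmul_mem_bc_iff {m : V} : (1 : E) ⊗ₜ[E'] m ∈ p.baseChange E ↔ m ∈ p := by
  refine ⟨fun h => ?_, fun h => Submodule.tmul_mem_baseChange_of_mem _ h⟩
  have h1 : ((Module.Basis.ofVectorSpace E' E).repr 1) ≠ 0 :=
    fun h0 => one_ne_zero ((Module.Basis.ofVectorSpace E' E).repr.map_eq_zero_iff.mp h0)
  obtain ⟨i, hi⟩ := Finsupp.ne_iff.mp h1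
  rw [Finsupp.coe_zero, Pi.zero_apply] at hi
  have h2 := (mem_bc_iff.mp h) i
  rw [bcEquiv_tmul] at h2
  have h3 := p.smul_mem (((Module.Basis.ofVectorSpace E' E).repr 1 i)⁻¹) h2
  rwa [inv_smul_smul₀ hi] at h3

lemma bc_le_bc_iff : p.baseChange E ≤ q.baseChange E ↔ p ≤ q := by
  constructor
  · intro h m hm
    exact one_tmul_mem_bc_iff.mp (h (Submodule.tmul_mem_baseChange_of_mem _ hm))
  · intro h x hx
    exact mem_bc_iff.mpr fun i => h (mem_bc_iff.mp hx i)

lemma bc_mono (h : p ≤ q) : p.baseChange E ≤ q.baseChange E := bc_le_bc_iff.mpr h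

lemma bc_inf : (p ⊓ q).baseChange E = p.baseChange E ⊓ q.baseChange E := by
  refine le_antisymm (le_inf (bc_mono inf_le_left) (bc_mono inf_le_right)) fun x hx => ?_
  exact mem_bc_iff.mpr fun i => ⟨mem_bc_iff.mp hx.1 i, mem_bc_iff.mp hx.2 i⟩

lemma bc_sup : (p ⊔ q).baseChange E = p.baseChange E ⊔ q.baseChange E := by
  refine le_antisymm ?_ (sup_le (bc_mono le_sup_left) (bc_mono le_sup_right))
  rw [Submodule.baseChange_eq_span]
  rw [Submodule.span_le]
  rintro _ ⟨m, hm, rfl⟩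
  obtain ⟨u, hu, w, hw, rfl⟩ := Submodule.mem_sup.mp hm
  have : (TensorProduct.mk E' E V 1) (u + w) = (1 : E) ⊗ₜ[E'] u + (1 : E) ⊗ₜ[E'] w := by
    simp [TensorProduct.tmul_add]
  rw [SetLike.mem_coe, this]
  exact add_mem (Submodule.mem_sup_left (Submodule.tmul_mem_baseChange_of_mem _ hu))
    (Submodule.mem_sup_right (Submodule.tmul_mem_baseChange_of_mem _ hw))

lemma bcEquiv_baseChange (f : V →ₗ[E'] V) (x : E ⊗[E'] V) (i) :
    (bcEquiv (f.baseChange E x) : _ →₀ V) i = f ((bcEquiv x : _ →₀ V) i) := by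
  induction x with
  | zero => simp
  | tmul a v => rw [LinearMap.baseChange_tmul, bcEquiv_tmul, bcEquiv_tmul, map_smul]
  | add x y hx hy => simp only [map_add, Finsupp.add_apply, hx, hy]

lemma bc_map (f : V →ₗ[E'] V) :
    (p.map f).baseChange E = (p.baseChange E).map (f.baseChange E) := by
  refine le_antisymm ?_ ?_
  · rw [Submodule.baseChange_eq_span, Submodule.span_le]
    rintro _ ⟨_, ⟨v, hv, rfl⟩, rfl⟩
    refine ⟨(1 : E) ⊗ₜ[E'] v, Submodule.tmul_mem_baseChange_of_mem _ hv, ?_⟩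
    rw [LinearMap.baseChange_tmul]
    rfl
  · rintro _ ⟨x, hx, rfl⟩
    exact mem_bc_iff.mpr fun i => by
      rw [bcEquiv_baseChange]
      exact Submodule.mem_map_of_mem (mem_bc_iff.mp hx i)

lemma surj_clause_iff {K M : Type*} [Field K] [AddCommGroup M] [Module K M]
    (f : M →ₗ[K] M) (A₁ A₂ B : Submodule K M) :
    (∀ y ∈ A₁, ∃ x ∈ A₂, y - f x ∈ B) ↔ A₁ ≤ A₂.map f ⊔ B := by
  constructor
  · intro h y hy
    obtain ⟨x, hx, hb⟩ := h y hy
    have : y = f x + (y - f x) := by abel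
    rw [this]
    exact add_mem (Submodule.mem_sup_left (Submodule.mem_map_of_mem hx))
      (Submodule.mem_sup_right hb)
  · intro h y hy
    obtain ⟨z, hz, b, hb, rfl⟩ := Submodule.mem_sup.mp (h hy)
    obtain ⟨x, hx, rfl⟩ := hz
    exact ⟨x, hx, by simpa using hb⟩

end BC2

open scoped TensorProduct in
/-- Compatibility of the relative monodromy filtration with extension of scalars
`E'/E`: a filtration `W'` on `V` is the relative monodromy filtration of `N` with
respect to `W` if and only if its base change to `E` is the relative monodromy
filtration of `1 ⊗ N` with respect to the base change of `W`. -/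
theorem isRelMonodromy_baseChange_iff
    {E' E V : Type*} [Field E'] [CharZero E'] [Field E] [Algebra E' E]
    [AddCommGroup V] [Module E' V] [FiniteDimensional E' V]
    (W W' : ℤ → Submodule E' V) (N : V →ₗ[E'] V)
    (hW : IsFinIncrFiltration W) (hW' : IsFinIncrFiltration W')
    (hN : IsNilpotent N) (hNW : ∀ w : ℤ, (W w).map N ≤ W w) :
    IsRelMonodromy N W W' ↔
      IsRelMonodromy (N.baseChange E)
        (fun w : ℤ => (W w).baseChange E) (fun w : ℤ => (W' w).baseChange E) := by
  constructor
  · rintro ⟨⟨hmono, ⟨a, ha⟩, ⟨b, hb⟩⟩, h2, h3⟩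
    refine ⟨⟨fun u w huw => bc_mono (hmono huw),
      ⟨a, fun w hw => by simp only []; rw [ha w hw, Submodule.baseChange_bot]⟩,
      ⟨b, fun w hw => by simp only []; rw [hb w hw, Submodule.baseChange_top]⟩⟩, ?_, ?_⟩
    · intro w
      simp only []
      rw [← bc_map]
      exact bc_mono (h2 w)
    · intro w m
      simp only []
      constructor
      · intro x hx hNx
        rw [← bc_inf] at hx
        rw [← LinearMap.baseChange_pow, ← bc_inf, ← bc_sup] at hNx
        rw [← bc_inf, ← bc_sup]
        refine mem_bc_iff.mpr fun i => (h3 w m).1 _ (mem_bc_iff.mp hx i) ?_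
        rw [← bcEquiv_baseChange]
        exact mem_bc_iff.mp hNx i
      · rw [surj_clause_iff, ← LinearMap.baseChange_pow, ← bc_inf, ← bc_inf, ← bc_inf,
          ← bc_map, ← bc_sup, ← bc_sup]
        exact bc_mono ((surj_clause_iff _ _ _ _).mp (h3 w m).2)
  · rintro ⟨⟨hmono, ⟨a, ha⟩, ⟨b, hb⟩⟩, h2, h3⟩
    refine ⟨⟨fun u w huw => bc_le_bc_iff.mp (hmono huw),
      ⟨a, fun w hw => eq_bot_iff.mpr (bc_le_bc_iff.mp
        (le_of_le_of_eq (ha w hw).le (Submodule.baseChange_bot E).symm))⟩,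
      ⟨b, fun w hw => eq_top_iff.mpr (bc_le_bc_iff.mp
        (le_of_eq_of_le (Submodule.baseChange_top E) (hb w hw).ge))⟩⟩, ?_, ?_⟩
    · intro w
      rw [← bc_le_bc_iff (E := E), bc_map]
      exact h2 w
    · intro w m
      constructor
      · intro x hx hNx
        have h1 : (1 : E) ⊗ₜ[E'] x ∈
            Submodule.baseChange E (W' (w + (m : ℤ))) ⊓ Submodule.baseChange E (W w) := by
          rw [← bc_inf]; exact Submodule.tmul_mem_baseChange_of_mem _ hx
        have hN1 : ((N.baseChange E) ^ m) ((1 : E) ⊗ₜ[E'] x) ∈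
            (Submodule.baseChange E (W' (w - (m : ℤ) - 1)) ⊓ Submodule.baseChange E (W w)) ⊔
              Submodule.baseChange E (W (w - 1)) := by
          rw [← LinearMap.baseChange_pow, LinearMap.baseChange_tmul, ← bc_inf, ← bc_sup]
          exact Submodule.tmul_mem_baseChange_of_mem _ hNx
        have hc := (h3 w m).1 _ h1 hN1
        rw [← bc_inf, ← bc_sup] at hc
        exact one_tmul_mem_bc_iff.mp hc
      · rw [surj_clause_iff, ← bc_le_bc_iff (E := E), bc_sup, bc_map, bc_inf, bc_inf,
          bc_sup, bc_inf, LinearMap.baseChange_pow]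
        exact (surj_clause_iff _ _ _ _).mp (h3 w m).2
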